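/- Fix positive integers k and N, and let A_1,…,A_k be nonnegative integers with ∑_{i=1}^k A_i = N and max_i A_i ≤ N − 1. Then ∏_{i=1}^k (A_i + 1)! ≤ 2·N!. -/

import Mathlib

lemma fac_mul_fac (a b : ℕ) :
    Nat.factorial (a + 1) * Nat.factorial (b + 1) ≤ Nat.factorial (a + b + 1) := by
  induction b with
  | zero => simp [Nat.factorial]
  | succ b ih =>
    have h1 : Nat.factorial (a + 1) * Nat.factorial (b + 1 + 1)
        = Nat.factorial (a + 1) * Nat.factorial (b + 1) * (b + 2) := by
      simp [Nat.factorial]; ring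
    rw [h1]
    calc Nat.factorial (a + 1) * Nat.factorial (b + 1) * (b + 2)
        ≤ Nat.factorial (a + b + 1) * (b + 2) := Nat.mul_le_mul_right _ ih
      _ ≤ Nat.factorial (a + b + 1) * (a + b + 2) := by
          exact Nat.mul_le_mul_left _ (by omega)
      _ = Nat.factorial (a + (b + 1) + 1) := by
          have : a + (b + 1) + 1 = (a + b + 1) + 1 := by ring
          rw [this, Nat.factorial_succ (a + b + 1)]; ring

lemma fac_mul_fac2 (a b : ℕ) (ha : 1 ≤ a) (hb : 1 ≤ b) :
    Nat.factorial (a + 1) * Nat.factorial (b + 1) ≤ 2 * Nat.factorial (a + b) := by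
  induction b with
  | zero => omega
  | succ b ih =>
    rcases Nat.eq_or_lt_of_le hb with h | h
    · have hb0 : b = 0 := by omega
      subst hb0
      simp [Nat.factorial]
      omega
    · have hb1 : 1 ≤ b := by omega
      have ih' := ih hb1
      have h1 : Nat.factorial (a + 1) * Nat.factorial (b + 1 + 1)
          = Nat.factorial (a + 1) * Nat.factorial (b + 1) * (b + 2) := by
        simp [Nat.factorial]; ring
      rw [h1]
      calc Nat.factorial (a + 1) * Nat.factorial (b + 1) * (b + 2)
          ≤ 2 * Nat.factorial (a + b) * (b + 2) := Nat.mul_le_mul_right _ ih'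
        _ ≤ 2 * Nat.factorial (a + b) * (a + b + 1) := by
            exact Nat.mul_le_mul_left _ (by omega)
        _ = 2 * Nat.factorial (a + (b + 1)) := by
            have : a + (b + 1) = (a + b) + 1 := by ring
            rw [this, Nat.factorial_succ (a + b)]; ring

lemma prod_fac_le {k : ℕ} (A : Fin k → ℕ) (s : Finset (Fin k)) :
    ∏ i ∈ s, Nat.factorial (A i + 1) ≤ Nat.factorial ((∑ i ∈ s, A i) + 1) := by
  induction s using Finset.induction with
  | empty => simp [Nat.factorial]
  | insert _ _ hx ih =>
    rename_i j s
    rw [Finset.prod_insert hx, Finset.sum_insert hx]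
    calc Nat.factorial (A j + 1) * ∏ i ∈ s, Nat.factorial (A i + 1)
        ≤ Nat.factorial (A j + 1) * Nat.factorial ((∑ i ∈ s, A i) + 1) :=
          Nat.mul_le_mul_left _ ih
      _ ≤ Nat.factorial (A j + (∑ i ∈ s, A i) + 1) := fac_mul_fac _ _

theorem stmt_5 (k N : ℕ) (hk : 0 < k) (hN : 0 < N)
    (A : Fin k → ℕ) (hA : ∑ i, A i = N) (hmax : ∀ i, A i ≤ N - 1) :
    ∏ i, Nat.factorial (A i + 1) ≤ 2 * Nat.factorial N := by
  have hne : ∑ i, A i ≠ 0 := by omega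
  obtain ⟨j, -, hj⟩ := Finset.exists_ne_zero_of_sum_ne_zero hne
  have hsplit : A j + ∑ i ∈ Finset.univ.erase j, A i = N := by
    rw [Finset.add_sum_erase _ _ (Finset.mem_univ j), hA]
  set b := ∑ i ∈ Finset.univ.erase j, A i with hb
  have hb1 : 1 ≤ b := by have := hmax j; omega
  have hprod : ∏ i, Nat.factorial (A i + 1)
      = Nat.factorial (A j + 1) * ∏ i ∈ Finset.univ.erase j, Nat.factorial (A i + 1) := by
    exact (Finset.mul_prod_erase Finset.univ (fun i => Nat.factorial (A i + 1)) (Finset.mem_univ j)).symm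
  rw [hprod]
  calc Nat.factorial (A j + 1) * ∏ i ∈ Finset.univ.erase j, Nat.factorial (A i + 1)
      ≤ Nat.factorial (A j + 1) * Nat.factorial (b + 1) :=
        Nat.mul_le_mul_left _ (prod_fac_le A _)
    _ ≤ 2 * Nat.factorial (A j + b) := fac_mul_fac2 _ _ (by omega) hb1
    _ = 2 * Nat.factorial N := by rw [hsplit]
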